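/- For every n ≥ 1 and x ∈ [0,1], the ratio of the absolute third to the second central moment of the Kantorovich operator satisfies |K_n((t−x)^3;x)| / K_n((t−x)^2;x) ≤ 5/(2(n+1)). -/

import Mathlib

open MeasureTheory Set

noncomputable def kantorovich (n : ℕ) (f : ℝ → ℝ) (x : ℝ) : ℝ :=
  ((n : ℝ) + 1) * ∑ k ∈ Finset.range (n + 1),
    (n.choose k : ℝ) * x ^ k * (1 - x) ^ (n - k) *
      ∫ t in ((k : ℝ) / ((n : ℝ) + 1))..(((k : ℝ) + 1) / ((n : ℝ) + 1)), f t

noncomputable def supNorm (f : ℝ → ℝ) : ℝ :=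
  sSup {y | ∃ x ∈ Icc (0:ℝ) 1, y = |f x|}

noncomputable def omega1 (f : ℝ → ℝ) (h : ℝ) : ℝ :=
  sSup {d | ∃ s ∈ Icc (0:ℝ) 1, ∃ t ∈ Icc (0:ℝ) 1, |s - t| ≤ h ∧ d = |f s - f t|}

noncomputable def omega2 (f : ℝ → ℝ) (h : ℝ) : ℝ :=
  sSup {d | ∃ t δ : ℝ, 0 < δ ∧ δ ≤ h ∧ t - δ ∈ Icc (0:ℝ) 1 ∧ t + δ ∈ Icc (0:ℝ) 1 ∧
    d = |f (t + δ) - 2 * f t + f (t - δ)|}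

/-! ### Bernstein basis sums -/

lemma bernsteinP0 (n : ℕ) (x : ℝ) :
    ∑ k ∈ Finset.range (n + 1), (n.choose k : ℝ) * x ^ k * (1 - x) ^ (n - k) = 1 := by
  have h : ∑ k ∈ Finset.range (n + 1), (n.choose k : ℝ) * x ^ k * (1 - x) ^ (n - k)
      = ∑ k ∈ Finset.range (n + 1), x ^ k * (1 - x) ^ (n - k) * (n.choose k : ℝ) :=
    Finset.sum_congr rfl fun k _ => by ring
  rw [h, ← add_pow]
  norm_num

lemma choose_mul_cast (m k : ℕ) :
    (((m + 1).choose (k + 1) : ℝ)) * ((k : ℝ) + 1) = ((m : ℝ) + 1) * (m.choose k : ℝ) := by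
  have h := Nat.add_one_mul_choose_eq m k
  have : ((m.succ * m.choose k : ℕ) : ℝ) = ((m.succ.choose k.succ * k.succ : ℕ) : ℝ) := by
    exact_mod_cast congrArg (Nat.cast (R := ℝ)) h
  push_cast at this
  linarith

lemma bernsteinP1 (n : ℕ) (x : ℝ) :
    ∑ k ∈ Finset.range (n + 1), (n.choose k : ℝ) * x ^ k * (1 - x) ^ (n - k) * (k : ℝ)
      = (n : ℝ) * x := by
  induction n with
  | zero => simp
  | succ m _ =>
    rw [Finset.sum_range_succ']
    simp only [Nat.cast_zero, mul_zero, add_zero]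
    have step : ∀ k ∈ Finset.range (m + 1),
        ((m + 1).choose (k + 1) : ℝ) * x ^ (k + 1) * (1 - x) ^ (m - k) * ((k : ℝ) + 1)
          = ((m : ℝ) + 1) * x * ((m.choose k : ℝ) * x ^ k * (1 - x) ^ (m - k)) := by
      intro k _
      have h := choose_mul_cast m k
      calc ((m + 1).choose (k + 1) : ℝ) * x ^ (k + 1) * (1 - x) ^ (m - k) * ((k : ℝ) + 1)
          = (((m + 1).choose (k + 1) : ℝ) * ((k : ℝ) + 1)) * x ^ (k + 1) * (1 - x) ^ (m - k) := by
            ring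
        _ = (((m : ℝ) + 1) * (m.choose k : ℝ)) * x ^ (k + 1) * (1 - x) ^ (m - k) := by rw [h]
        _ = ((m : ℝ) + 1) * x * ((m.choose k : ℝ) * x ^ k * (1 - x) ^ (m - k)) := by ring
    push_cast
    rw [Finset.sum_congr rfl step, ← Finset.mul_sum, bernsteinP0 m x]
    push_cast
    ring

lemma bernsteinP2 (n : ℕ) (x : ℝ) :
    ∑ k ∈ Finset.range (n + 1),
        (n.choose k : ℝ) * x ^ k * (1 - x) ^ (n - k) * ((k : ℝ) * ((k : ℝ) - 1))
      = (n : ℝ) * ((n : ℝ) - 1) * x ^ 2 := by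
  induction n with
  | zero => simp
  | succ m _ =>
    rw [Finset.sum_range_succ']
    simp only [Nat.cast_zero, zero_mul, mul_zero, add_zero]
    have step : ∀ k ∈ Finset.range (m + 1),
        ((m + 1).choose (k + 1) : ℝ) * x ^ (k + 1) * (1 - x) ^ (m - k) *
            (((k : ℝ) + 1) * (((k : ℝ) + 1) - 1))
          = ((m : ℝ) + 1) * x *
              ((m.choose k : ℝ) * x ^ k * (1 - x) ^ (m - k) * (k : ℝ)) := by
      intro k _
      have h := choose_mul_cast m k
      calc ((m + 1).choose (k + 1) : ℝ) * x ^ (k + 1) * (1 - x) ^ (m - k) *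
              (((k : ℝ) + 1) * (((k : ℝ) + 1) - 1))
          = (((m + 1).choose (k + 1) : ℝ) * ((k : ℝ) + 1)) * x ^ (k + 1) * (1 - x) ^ (m - k) *
              (k : ℝ) := by ring
        _ = (((m : ℝ) + 1) * (m.choose k : ℝ)) * x ^ (k + 1) * (1 - x) ^ (m - k) * (k : ℝ) := by
            rw [h]
        _ = ((m : ℝ) + 1) * x * ((m.choose k : ℝ) * x ^ k * (1 - x) ^ (m - k) * (k : ℝ)) := by
            ring
    push_cast
    rw [Finset.sum_congr rfl step, ← Finset.mul_sum, bernsteinP1 m x]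
    push_cast
    ring

lemma bernsteinP3 (n : ℕ) (x : ℝ) :
    ∑ k ∈ Finset.range (n + 1),
        (n.choose k : ℝ) * x ^ k * (1 - x) ^ (n - k) *
          ((k : ℝ) * ((k : ℝ) - 1) * ((k : ℝ) - 2))
      = (n : ℝ) * ((n : ℝ) - 1) * ((n : ℝ) - 2) * x ^ 3 := by
  induction n with
  | zero => simp
  | succ m _ =>
    rw [Finset.sum_range_succ']
    simp only [Nat.cast_zero, zero_mul, mul_zero, add_zero]
    have step : ∀ k ∈ Finset.range (m + 1),
        ((m + 1).choose (k + 1) : ℝ) * x ^ (k + 1) * (1 - x) ^ (m - k) *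
            (((k : ℝ) + 1) * (((k : ℝ) + 1) - 1) * (((k : ℝ) + 1) - 2))
          = ((m : ℝ) + 1) * x *
              ((m.choose k : ℝ) * x ^ k * (1 - x) ^ (m - k) *
                ((k : ℝ) * ((k : ℝ) - 1))) := by
      intro k _
      have h := choose_mul_cast m k
      calc ((m + 1).choose (k + 1) : ℝ) * x ^ (k + 1) * (1 - x) ^ (m - k) *
              (((k : ℝ) + 1) * (((k : ℝ) + 1) - 1) * (((k : ℝ) + 1) - 2))
          = (((m + 1).choose (k + 1) : ℝ) * ((k : ℝ) + 1)) * x ^ (k + 1) * (1 - x) ^ (m - k) *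
              ((k : ℝ) * ((k : ℝ) - 1)) := by ring
        _ = (((m : ℝ) + 1) * (m.choose k : ℝ)) * x ^ (k + 1) * (1 - x) ^ (m - k) *
              ((k : ℝ) * ((k : ℝ) - 1)) := by rw [h]
        _ = ((m : ℝ) + 1) * x *
              ((m.choose k : ℝ) * x ^ k * (1 - x) ^ (m - k) * ((k : ℝ) * ((k : ℝ) - 1))) := by
            ring
    push_cast
    rw [Finset.sum_congr rfl step, ← Finset.mul_sum, bernsteinP2 m x]
    push_cast
    ring

/-! ### Integral evaluation -/

lemma integral_sub_pow (a b x : ℝ) (m : ℕ) :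
    (∫ t in a..b, (t - x) ^ m)
      = ((b - x) ^ (m + 1) - (a - x) ^ (m + 1)) / ((m : ℝ) + 1) := by
  rw [show (fun t : ℝ => (t - x) ^ m) = fun t : ℝ => (fun s : ℝ => s ^ m) (t - x) from rfl,
    intervalIntegral.integral_comp_sub_right (fun s : ℝ => s ^ m) x, integral_pow]

/-! ### Closed forms for central moments -/

lemma kantorovich_second_moment (n : ℕ) (x : ℝ) :
    kantorovich n (fun t => (t - x) ^ 2) x
      = (((n : ℝ) - 1) * x * (1 - x) + 1 / 3) / ((n : ℝ) + 1) ^ 2 := by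
  have hN : ((n : ℝ) + 1) ≠ 0 := by positivity
  unfold kantorovich
  rw [Finset.mul_sum]
  have key : ∀ k ∈ Finset.range (n + 1),
      ((n : ℝ) + 1) * ((n.choose k : ℝ) * x ^ k * (1 - x) ^ (n - k) *
          ∫ t in ((k : ℝ) / ((n : ℝ) + 1))..(((k : ℝ) + 1) / ((n : ℝ) + 1)), (t - x) ^ 2)
        = (x ^ 2 - x / ((n : ℝ) + 1) + 1 / (3 * ((n : ℝ) + 1) ^ 2)) *
            ((n.choose k : ℝ) * x ^ k * (1 - x) ^ (n - k))
          + (2 / ((n : ℝ) + 1) ^ 2 - 2 * x / ((n : ℝ) + 1)) *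
              ((n.choose k : ℝ) * x ^ k * (1 - x) ^ (n - k) * (k : ℝ))
          + (1 / ((n : ℝ) + 1) ^ 2) *
              ((n.choose k : ℝ) * x ^ k * (1 - x) ^ (n - k) * ((k : ℝ) * ((k : ℝ) - 1))) := by
    intro k _
    rw [integral_sub_pow]
    push_cast
    field_simp
    ring
  rw [Finset.sum_congr rfl key, Finset.sum_add_distrib, Finset.sum_add_distrib,
    ← Finset.mul_sum, ← Finset.mul_sum, ← Finset.mul_sum,
    bernsteinP0, bernsteinP1, bernsteinP2]
  field_simp
  ring

lemma kantorovich_third_moment (n : ℕ) (x : ℝ) :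
    kantorovich n (fun t => (t - x) ^ 3) x
      = (1 - 2 * x) * (10 * (n : ℝ) * x * (1 - x) + 2 * x ^ 2 - 2 * x + 1) /
          (4 * ((n : ℝ) + 1) ^ 3) := by
  have hN : ((n : ℝ) + 1) ≠ 0 := by positivity
  unfold kantorovich
  rw [Finset.mul_sum]
  have key : ∀ k ∈ Finset.range (n + 1),
      ((n : ℝ) + 1) * ((n.choose k : ℝ) * x ^ k * (1 - x) ^ (n - k) *
          ∫ t in ((k : ℝ) / ((n : ℝ) + 1))..(((k : ℝ) + 1) / ((n : ℝ) + 1)), (t - x) ^ 3)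
        = (-x ^ 3 + 3 * x ^ 2 / (2 * ((n : ℝ) + 1)) - x / ((n : ℝ) + 1) ^ 2
              + 1 / (4 * ((n : ℝ) + 1) ^ 3)) *
            ((n.choose k : ℝ) * x ^ k * (1 - x) ^ (n - k))
          + (7 / (2 * ((n : ℝ) + 1) ^ 3) - 6 * x / ((n : ℝ) + 1) ^ 2
                + 3 * x ^ 2 / ((n : ℝ) + 1)) *
              ((n.choose k : ℝ) * x ^ k * (1 - x) ^ (n - k) * (k : ℝ))
          + (9 / (2 * ((n : ℝ) + 1) ^ 3) - 3 * x / ((n : ℝ) + 1) ^ 2) *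
              ((n.choose k : ℝ) * x ^ k * (1 - x) ^ (n - k) * ((k : ℝ) * ((k : ℝ) - 1)))
          + (1 / ((n : ℝ) + 1) ^ 3) *
              ((n.choose k : ℝ) * x ^ k * (1 - x) ^ (n - k) *
                ((k : ℝ) * ((k : ℝ) - 1) * ((k : ℝ) - 2))) := by
    intro k _
    rw [integral_sub_pow]
    push_cast
    field_simp
    ring
  rw [Finset.sum_congr rfl key, Finset.sum_add_distrib, Finset.sum_add_distrib,
    Finset.sum_add_distrib, ← Finset.mul_sum, ← Finset.mul_sum, ← Finset.mul_sum,
    ← Finset.mul_sum, bernsteinP0, bernsteinP1, bernsteinP2, bernsteinP3]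
  field_simp
  ring

theorem kantorovich_third_to_second_moment_ratio (n : ℕ) (hn : 1 ≤ n) (x : ℝ)
    (hx : x ∈ Icc (0:ℝ) 1) :
    |kantorovich n (fun t => (t - x) ^ 3) x| / kantorovich n (fun t => (t - x) ^ 2) x
      ≤ 5 / (2 * ((n : ℝ) + 1)) := by
  obtain ⟨hx0, hx1⟩ := hx
  have hn1 : (1 : ℝ) ≤ (n : ℝ) := by exact_mod_cast hn
  have hN : (0 : ℝ) < (n : ℝ) + 1 := by linarith
  have hu0 : 0 ≤ x * (1 - x) := mul_nonneg hx0 (by linarith)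
  have hu4 : x * (1 - x) ≤ 1 / 4 := by nlinarith [sq_nonneg (2 * x - 1)]
  rw [kantorovich_second_moment, kantorovich_third_moment]
  have hK2 : (0 : ℝ) < (((n : ℝ) - 1) * x * (1 - x) + 1 / 3) / ((n : ℝ) + 1) ^ 2 := by
    apply div_pos
    · nlinarith
    · positivity
  rw [div_le_iff₀ hK2]
  have hA : (0 : ℝ) ≤ 10 * (n : ℝ) * x * (1 - x) + 2 * x ^ 2 - 2 * x + 1 := by nlinarith
  have habs : |(1 - 2 * x) * (10 * (n : ℝ) * x * (1 - x) + 2 * x ^ 2 - 2 * x + 1) /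
      (4 * ((n : ℝ) + 1) ^ 3)|
      = |1 - 2 * x| * (10 * (n : ℝ) * x * (1 - x) + 2 * x ^ 2 - 2 * x + 1) /
          (4 * ((n : ℝ) + 1) ^ 3) := by
    rw [abs_div, abs_mul, abs_of_nonneg hA, abs_of_pos (by positivity :
      (0:ℝ) < 4 * ((n : ℝ) + 1) ^ 3)]
  rw [habs]
  have hs1 : |1 - 2 * x| ≤ 1 := by
    rw [abs_le]; constructor <;> linarith
  have hs0 : 0 ≤ |1 - 2 * x| := abs_nonneg _
  rw [div_le_iff₀ (by positivity : (0:ℝ) < 4 * ((n : ℝ) + 1) ^ 3)]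
  have hgoal : |1 - 2 * x| * (10 * (n : ℝ) * x * (1 - x) + 2 * x ^ 2 - 2 * x + 1)
      ≤ 10 * (((n : ℝ) - 1) * x * (1 - x)) + 10 / 3 := by
    have h1 : |1 - 2 * x| * (10 * (n : ℝ) * x * (1 - x) + 2 * x ^ 2 - 2 * x + 1)
        ≤ 10 * (n : ℝ) * x * (1 - x) + 2 * x ^ 2 - 2 * x + 1 := by
      nlinarith
    nlinarith
  have hexpand : 5 / (2 * ((n : ℝ) + 1)) *
      ((((n : ℝ) - 1) * x * (1 - x) + 1 / 3) / ((n : ℝ) + 1) ^ 2) * (4 * ((n : ℝ) + 1) ^ 3)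
      = 10 * (((n : ℝ) - 1) * x * (1 - x)) + 10 / 3 := by
    field_simp
    ring
  rw [hexpand]
  exact hgoal
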